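/- Fix positive integers N and D, and let B be a symmetric N × N real matrix. Let μ be the product probability measure on functions Fin N × Fin D → ℝ in which every coordinate is an independent standard real Gaussian gaussianReal 0 1, and for a sample x let X(x) denote the corresponding N × D real matrix. Then ∫ trace( (X(x)ᵀ · B · X(x))² ) dμ(x) = D · Σ_{i,j=1}^{N} [ (D+1) · B_{ij}² + B_{ii} · B_{jj} ]. -/

import Mathlib

open MeasureTheory ProbabilityTheory Matrix Real
open scoped ENNReal NNReal

namespace GaussWick

lemma pow_le_factorial_mul_exp (n : ℕ) {t : ℝ} (ht : 0 ≤ t) :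
    t ^ n ≤ n.factorial * Real.exp t := by
  have h := Real.sum_le_exp_of_nonneg ht (n + 1)
  have h1 : t ^ n / n.factorial ≤ Real.exp t := by
    refine le_trans ?_ h
    have he : t ^ n / n.factorial = ∑ i ∈ Finset.range (n+1), if i = n then t ^ i / i.factorial else 0 := by
      simp
    rw [he]
    apply Finset.sum_le_sum
    intro i hi
    split
    · exact le_rfl
    · positivity
  have hfac : (0:ℝ) < n.factorial := by positivity
  rw [div_le_iff₀ hfac] at h1
  linarith [h1]

lemma integrable_pow_mul_gauss (n : ℕ) :
    Integrable (fun x : ℝ => x ^ n * Real.exp (-(1/2 : ℝ) * x ^ 2)) := by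
  have hg : Integrable (fun x : ℝ =>
      Real.exp (-(1/2:ℝ) * x ^ 2) +
        (n.factorial * 4 ^ n : ℝ) * Real.exp (-(1/4:ℝ) * x ^ 2)) :=
    (integrable_exp_neg_mul_sq (by norm_num)).add
      ((integrable_exp_neg_mul_sq (by norm_num)).const_mul _)
  refine hg.mono' ?_ (Filter.Eventually.of_forall fun x => ?_)
  · exact ((measurable_id.pow_const n).mul
      (((measurable_id.pow_const 2).const_mul _).exp)).aestronglyMeasurable
  · rw [Real.norm_eq_abs, abs_mul, abs_of_pos (Real.exp_pos _), abs_pow]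
    rcases le_total (|x|) 1 with hx | hx
    · have h1 : |x| ^ n ≤ 1 := pow_le_one₀ (abs_nonneg x) hx
      have h2 : (0:ℝ) ≤ (n.factorial * 4 ^ n : ℝ) * Real.exp (-(1/4:ℝ) * x ^ 2) := by positivity
      nlinarith [Real.exp_pos (-(1/2:ℝ) * x ^ 2)]
    · have h1 : |x| ^ n ≤ (x ^ 2) ^ n := by
        apply pow_le_pow_left₀ (abs_nonneg x)
        nlinarith [abs_nonneg x, sq_abs x]
      have h2 : (x ^ 2) ^ n ≤ 4 ^ n * (n.factorial * Real.exp (x ^ 2 / 4)) := by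
        have h3 := pow_le_factorial_mul_exp n (t := x ^ 2 / 4) (by positivity)
        have h4 : (x ^ 2) ^ n = 4 ^ n * (x^2/4) ^ n := by
          rw [← mul_pow]; ring_nf
        rw [h4]
        exact mul_le_mul_of_nonneg_left h3 (by positivity)
      have h5 : Real.exp (x^2/4) * Real.exp (-(1/2:ℝ) * x ^ 2) = Real.exp (-(1/4:ℝ) * x^2) := by
        rw [← Real.exp_add]; ring_nf
      have h6 : |x| ^ n * Real.exp (-(1/2:ℝ) * x ^ 2) ≤
          (n.factorial * 4 ^ n : ℝ) * Real.exp (-(1/4:ℝ) * x ^ 2) := by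
        calc |x| ^ n * Real.exp (-(1/2:ℝ) * x ^ 2)
            ≤ (4 ^ n * (n.factorial * Real.exp (x ^ 2 / 4))) * Real.exp (-(1/2:ℝ) * x ^ 2) := by
              apply mul_le_mul_of_nonneg_right (le_trans h1 h2) (Real.exp_pos _).le
          _ = (n.factorial * 4 ^ n : ℝ) * (Real.exp (x^2/4) * Real.exp (-(1/2:ℝ) * x ^ 2)) := by ring
          _ = (n.factorial * 4 ^ n : ℝ) * Real.exp (-(1/4:ℝ) * x ^ 2) := by rw [h5]
      nlinarith [Real.exp_pos (-(1/2:ℝ) * x ^ 2)]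

end GaussWick

namespace GaussWick

noncomputable def P (n : ℕ) : ℝ := ∫ x : ℝ, x ^ n * Real.exp (-(1/2:ℝ) * x ^ 2)

lemma P_zero : P 0 = Real.sqrt (2 * π) := by
  have := integral_gaussian (1/2 : ℝ)
  simp only [P, pow_zero, one_mul]
  rw [this]
  rw [show π / (1/2:ℝ) = 2 * π by ring]

lemma P_one : P 1 = 0 := by
  have h : ∫ x : ℝ, (-x) ^ 1 * Real.exp (-(1/2:ℝ) * (-x) ^ 2)
      = ∫ x : ℝ, x ^ 1 * Real.exp (-(1/2:ℝ) * x ^ 2) :=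
    integral_neg_eq_self (fun x : ℝ => x ^ 1 * Real.exp (-(1/2:ℝ) * x ^ 2)) _
  rw [show (fun x : ℝ => (-x) ^ 1 * Real.exp (-(1/2:ℝ) * (-x) ^ 2))
      = fun x : ℝ => -(x ^ 1 * Real.exp (-(1/2:ℝ) * x ^ 2)) by ext x; ring_nf] at h
  rw [integral_neg] at h
  have : P 1 = -P 1 := by rw [P] at *; linarith [h]
  linarith

lemma P_rec (k : ℕ) : P (k + 2) = (k + 1) * P k := by
  have hderiv : ∀ x : ℝ, HasDerivAt (fun x : ℝ => x ^ (k+1) * Real.exp (-(1/2:ℝ) * x ^ 2))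
      (((k+1 : ℝ) * x ^ k) * Real.exp (-(1/2:ℝ) * x ^ 2)
        - x ^ (k+2) * Real.exp (-(1/2:ℝ) * x ^ 2)) x := by
    intro x
    have h1 : HasDerivAt (fun x : ℝ => x ^ (k+1)) ((k+1 : ℝ) * x ^ k) x := by
      simpa using hasDerivAt_pow (k+1) x
    have h2 : HasDerivAt (fun x : ℝ => Real.exp (-(1/2:ℝ) * x ^ 2))
        (Real.exp (-(1/2:ℝ) * x ^ 2) * (-(1/2:ℝ) * (2 * x))) x := by
      have h3 : HasDerivAt (fun x : ℝ => -(1/2:ℝ) * x ^ 2) (-(1/2:ℝ) * (2 * x)) x := by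
        simpa using (hasDerivAt_pow 2 x).const_mul (-(1/2:ℝ))
      exact h3.exp
    have := h1.mul h2
    refine this.congr_deriv ?_
    ring
  have hint : ∀ n : ℕ, Integrable (fun x : ℝ => x ^ n * Real.exp (-(1/2:ℝ) * x ^ 2)) :=
    integrable_pow_mul_gauss
  have hint' : Integrable (fun x : ℝ => ((k+1 : ℝ) * x ^ k) * Real.exp (-(1/2:ℝ) * x ^ 2)
      - x ^ (k+2) * Real.exp (-(1/2:ℝ) * x ^ 2)) := by
    have := ((hint k).const_mul ((k:ℝ)+1)).sub (hint (k+2))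
    simpa [mul_assoc, Pi.sub_def] using this
  have h0 := integral_eq_zero_of_hasDerivAt_of_integrable hderiv hint' (hint (k+1))
  have h1 : Integrable (fun x : ℝ => ((k+1 : ℝ) * x ^ k) * Real.exp (-(1/2:ℝ) * x ^ 2)) := by
    have := (hint k).const_mul ((k:ℝ)+1)
    simpa [mul_assoc] using this
  rw [integral_sub h1 (hint (k+2))] at h0
  have h2 : ∫ x : ℝ, ((k+1 : ℝ) * x ^ k) * Real.exp (-(1/2:ℝ) * x ^ 2) = (k+1:ℝ) * P k := by
    rw [P, ← MeasureTheory.integral_const_mul]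
    congr 1; ext x; ring
  rw [h2] at h0
  have : (k+1:ℝ) * P k - P (k+2) = 0 := by simpa [P] using h0
  linarith

end GaussWick

namespace GaussWick

lemma gaussianReal_eq_withDensity :
    gaussianReal 0 1 = (volume : Measure ℝ).withDensity
      (fun x => ((Real.toNNReal (gaussianPDFReal 0 1 x) : ℝ≥0) : ℝ≥0∞)) := by
  rw [gaussianReal_of_var_ne_zero 0 one_ne_zero]
  congr 1

lemma pdf_form (x : ℝ) :
    gaussianPDFReal 0 1 x = (Real.sqrt (2 * π))⁻¹ * Real.exp (-(1/2:ℝ) * x ^ 2) := by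
  unfold gaussianPDFReal
  push_cast
  norm_num
  left
  ring_nf

lemma integral_gaussianReal (g : ℝ → ℝ) :
    ∫ y, g y ∂gaussianReal 0 1
      = ∫ x : ℝ, (Real.sqrt (2 * π))⁻¹ * (g x * Real.exp (-(1/2:ℝ) * x ^ 2)) := by
  rw [gaussianReal_eq_withDensity,
    integral_withDensity_eq_integral_smul ((measurable_gaussianPDFReal 0 1).real_toNNReal) g]
  congr 1
  ext x
  rw [NNReal.smul_def, smul_eq_mul, Real.coe_toNNReal _ (gaussianPDFReal_nonneg 0 1 x), pdf_form]
  ring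

lemma integrable_pow_gaussianReal (n : ℕ) :
    Integrable (fun y : ℝ => y ^ n) (gaussianReal 0 1) := by
  rw [gaussianReal_eq_withDensity,
    integrable_withDensity_iff_integrable_smul ((measurable_gaussianPDFReal 0 1).real_toNNReal)]
  have : Integrable (fun x : ℝ => (Real.sqrt (2 * π))⁻¹ * (x ^ n * Real.exp (-(1/2:ℝ) * x ^ 2))) :=
    (integrable_pow_mul_gauss n).const_mul _
  apply this.congr
  filter_upwards with x
  rw [NNReal.smul_def, smul_eq_mul, Real.coe_toNNReal _ (gaussianPDFReal_nonneg 0 1 x), pdf_form]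
  ring

noncomputable def M (n : ℕ) : ℝ := ∫ y, y ^ n ∂gaussianReal 0 1

lemma sqrt_two_pi_pos : (0:ℝ) < Real.sqrt (2 * π) := Real.sqrt_pos.2 (by positivity)

lemma M_eq (n : ℕ) : M n = (Real.sqrt (2 * π))⁻¹ * P n := by
  rw [M, integral_gaussianReal, MeasureTheory.integral_const_mul, P]

@[simp] lemma M_zero : M 0 = 1 := by
  rw [M_eq, P_zero]; field_simp
@[simp] lemma M_one : M 1 = 0 := by rw [M_eq, P_one]; ring
@[simp] lemma M_two : M 2 = 1 := by
  rw [M_eq, show (2:ℕ) = 0 + 2 from rfl, P_rec, P_zero]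
  have := sqrt_two_pi_pos; field_simp; simp
@[simp] lemma M_four : M 4 = 3 := by
  rw [M_eq, show (4:ℕ) = 2 + 2 from rfl, P_rec, show P 2 = P (0 + 2) from rfl, P_rec, P_zero]
  have := sqrt_two_pi_pos; field_simp; ring

end GaussWick

namespace GaussWick

def G : Type := ℝ

instance : MeasurableSpace G := inferInstanceAs (MeasurableSpace ℝ)
noncomputable instance : MeasureSpace G := ⟨(gaussianReal 0 1 : Measure ℝ)⟩
instance : IsProbabilityMeasure (volume : Measure G) :=
  inferInstanceAs (IsProbabilityMeasure (gaussianReal 0 1))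
instance : SigmaFinite (volume : Measure G) := inferInstance

lemma integral_pi_prod {ι : Type*} [Fintype ι] (f : ι → ℝ → ℝ) :
    ∫ x : ι → ℝ, ∏ i, f i (x i) ∂(Measure.pi fun _ : ι => gaussianReal 0 1)
      = ∏ i, ∫ y, f i y ∂gaussianReal 0 1 :=
  MeasureTheory.integral_fintype_prod_eq_prod f

lemma integrable_pi_prod {ι : Type*} [Fintype ι] (f : ι → ℝ → ℝ)
    (hf : ∀ i, Integrable (f i) (gaussianReal 0 1)) :
    Integrable (fun x : ι → ℝ => ∏ i, f i (x i))
      (Measure.pi fun _ : ι => gaussianReal 0 1) :=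
  MeasureTheory.Integrable.fintype_prod (f := f) hf

end GaussWick

namespace GaussWick

variable {ι : Type*} [Fintype ι] [DecidableEq ι]

/-- multiplicity function of the four coordinates -/
def mult (c1 c2 c3 c4 : ι) : ι → ℕ := fun c =>
  (if c = c1 then 1 else 0) + (if c = c2 then 1 else 0)
    + (if c = c3 then 1 else 0) + (if c = c4 then 1 else 0)

lemma monomial_eq (c1 c2 c3 c4 : ι) (x : ι → ℝ) :
    x c1 * x c2 * x c3 * x c4 = ∏ c, x c ^ mult c1 c2 c3 c4 c := by
  simp only [mult, pow_add, Finset.prod_mul_distrib, pow_ite, pow_one, pow_zero,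
    Finset.prod_ite_eq', Finset.mem_univ, if_true]

lemma integrable_monomial (c1 c2 c3 c4 : ι) :
    Integrable (fun x : ι → ℝ => x c1 * x c2 * x c3 * x c4)
      (Measure.pi fun _ : ι => gaussianReal 0 1) := by
  have h := integrable_pi_prod (fun c y => y ^ mult c1 c2 c3 c4 c)
    (fun c => integrable_pow_gaussianReal _)
  apply h.congr
  filter_upwards with x
  rw [monomial_eq]

lemma integral_monomial (c1 c2 c3 c4 : ι) :
    ∫ x : ι → ℝ, x c1 * x c2 * x c3 * x c4 ∂(Measure.pi fun _ : ι => gaussianReal 0 1)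
      = ∏ c, M (mult c1 c2 c3 c4 c) := by
  rw [show (fun x : ι → ℝ => x c1 * x c2 * x c3 * x c4)
      = fun x : ι → ℝ => ∏ c, x c ^ mult c1 c2 c3 c4 c from funext (monomial_eq c1 c2 c3 c4)]
  exact integral_pi_prod (fun c y => y ^ mult c1 c2 c3 c4 c)

end GaussWick

namespace GaussWick

variable {ι : Type*} [Fintype ι] [DecidableEq ι]

lemma prod_two {a b : ι} (hab : a ≠ b) (p q : ℝ) :
    ∏ c, (if c = a then p else if c = b then q else 1) = p * q := by
  rw [← Finset.prod_subset (Finset.subset_univ ({a, b} : Finset ι))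
    (fun x _ hx => by
      simp only [Finset.mem_insert, Finset.mem_singleton, not_or] at hx
      simp [hx.1, hx.2])]
  rw [Finset.prod_insert (by simp [hab]), Finset.prod_singleton]
  simp [Ne.symm hab, hab]

lemma wick (c1 c2 c3 c4 : ι) :
    ∫ x : ι → ℝ, x c1 * x c2 * x c3 * x c4 ∂(Measure.pi fun _ : ι => gaussianReal 0 1)
      = (if c1 = c2 then (1:ℝ) else 0) * (if c3 = c4 then 1 else 0)
        + (if c1 = c3 then (1:ℝ) else 0) * (if c2 = c4 then 1 else 0)
        + (if c1 = c4 then (1:ℝ) else 0) * (if c2 = c3 then 1 else 0) := by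
  rw [integral_monomial]
  by_cases h12 : c1 = c2
  · subst h12
    by_cases h13 : c1 = c3
    · subst h13
      by_cases h14 : c1 = c4
      · subst h14
        -- all four equal
        have hc : ∀ c, M (mult c1 c1 c1 c1 c) = if c = c1 then M 4 else 1 := by
          intro c; by_cases h : c = c1 <;> simp [mult, h]
        rw [Finset.prod_congr rfl (fun c _ => hc c), Finset.prod_ite_eq',
          if_pos (Finset.mem_univ c1)]
        norm_num
      · -- c1 = c2 = c3 ≠ c4 : odd multiplicity at c4
        rw [Finset.prod_eq_zero (Finset.mem_univ c4)
          (by simp [mult, Ne.symm h14] : M (mult c1 c1 c1 c4 c4) = 0)]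
        simp [h14]
    · by_cases h14 : c1 = c4
      · subst h14
        -- c1 = c2 = c4 ≠ c3
        rw [Finset.prod_eq_zero (Finset.mem_univ c3)
          (by simp [mult, Ne.symm h13] : M (mult c1 c1 c3 c1 c3) = 0)]
        simp [h13, Ne.symm h13]
      · by_cases h34 : c3 = c4
        · subst h34
          -- pairs (c1=c2), (c3=c4), c1 ≠ c3
          have hc : ∀ c, M (mult c1 c1 c3 c3 c)
              = if c = c1 then M 2 else if c = c3 then M 2 else 1 := by
            intro c
            by_cases h1 : c = c1 <;> by_cases h2 : c = c3
            · exact absurd (h1 ▸ h2) h13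
            · simp [mult, h1, h2, h13]
            · simp [mult, h1, h2, Ne.symm h13]
            · simp [mult, h1, h2]
          rw [Finset.prod_congr rfl (fun c _ => hc c), prod_two h13]
          simp [h13, h14]
        · -- c3 has multiplicity 1
          rw [Finset.prod_eq_zero (Finset.mem_univ c3)
            (by simp [mult, Ne.symm h13, h34] : M (mult c1 c1 c3 c4 c3) = 0)]
          simp [h13, h34]
  · by_cases h13 : c1 = c3
    · subst h13
      by_cases h24 : c2 = c4
      · subst h24
        -- pairs (c1=c3), (c2=c4), c1 ≠ c2
        have hc : ∀ c, M (mult c1 c2 c1 c2 c)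
            = if c = c1 then M 2 else if c = c2 then M 2 else 1 := by
          intro c
          by_cases h1 : c = c1 <;> by_cases h2 : c = c2
          · exact absurd (h1 ▸ h2) h12
          · simp [mult, h1, h2, h12]
          · simp [mult, h1, h2, Ne.symm h12]
          · simp [mult, h1, h2]
        rw [Finset.prod_congr rfl (fun c _ => hc c), prod_two h12]
        simp [h12]
      · by_cases h14 : c1 = c4
        · subst h14
          -- c1 = c3 = c4, c2 has mult 1 (c2 ≠ c1)
          rw [Finset.prod_eq_zero (Finset.mem_univ c2)
            (by simp [mult, Ne.symm h12, h24] : M (mult c1 c2 c1 c1 c2) = 0)]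
          simp [h12, h24, Ne.symm h12]
        · -- c4 mult 1 : c4 ≠ c1(=c3), c4 ≠ c2
          rw [Finset.prod_eq_zero (Finset.mem_univ c4)
            (by simp [mult, Ne.symm h14, Ne.symm h24] : M (mult c1 c2 c1 c4 c4) = 0)]
          simp [h12, h14, h24]
    · by_cases h14 : c1 = c4
      · subst h14
        by_cases h23 : c2 = c3
        · subst h23
          -- pairs (c1=c4), (c2=c3), c1 ≠ c2
          have hc : ∀ c, M (mult c1 c2 c2 c1 c)
              = if c = c1 then M 2 else if c = c2 then M 2 else 1 := by
            intro c
            by_cases h1 : c = c1 <;> by_cases h2 : c = c2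
            · exact absurd (h1 ▸ h2) h12
            · simp [mult, h1, h2, h12]
            · simp [mult, h1, h2, Ne.symm h12]
            · simp [mult, h1, h2]
          rw [Finset.prod_congr rfl (fun c _ => hc c), prod_two h12]
          simp [h12, h13]
        · -- c2 mult 1 : c2 ≠ c1(=c4), c2 ≠ c3
          rw [Finset.prod_eq_zero (Finset.mem_univ c2)
            (by simp [mult, Ne.symm h12, h23] : M (mult c1 c2 c3 c1 c2) = 0)]
          simp [h12, h13, h23]
      · -- c1 mult 1
        rw [Finset.prod_eq_zero (Finset.mem_univ c1)
          (by simp [mult, h12, h13, h14] : M (mult c1 c2 c3 c4 c1) = 0)]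
        simp [h12, h13, h14]

end GaussWick

namespace GaussWick

lemma collapse (N D : ℕ) (B : Matrix (Fin N) (Fin N) ℝ) (hB : B.IsSymm) :
    ∑ a : Fin D, ∑ b : Fin D, ∑ l : Fin N, ∑ k : Fin N, ∑ j : Fin N, ∑ i : Fin N,
      B i j * B k l *
        ((if ((i,a) : Fin N × Fin D) = (j,b) then (1:ℝ) else 0) * (if ((k,b) : Fin N × Fin D) = (l,a) then 1 else 0)
         + (if ((i,a) : Fin N × Fin D) = (k,b) then (1:ℝ) else 0) * (if ((j,b) : Fin N × Fin D) = (l,a) then 1 else 0)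
         + (if ((i,a) : Fin N × Fin D) = (l,a) then (1:ℝ) else 0) * (if ((j,b) : Fin N × Fin D) = (k,b) then 1 else 0))
      = (D : ℝ) * ∑ i : Fin N, ∑ j : Fin N,
        (((D : ℝ) + 1) * (B i j) ^ 2 + B i i * B j j) := by
  simp only [Prod.mk.injEq, ite_and, mul_add, Finset.sum_add_distrib, mul_ite, ite_mul,
    mul_one, mul_zero, zero_mul, one_mul, Finset.sum_ite_eq, Finset.sum_ite_eq',
    Finset.mem_univ, if_true, Finset.sum_ite_irrel, Finset.sum_const_zero]
  have hsymm : ∀ i j, B j i = B i j := fun i j => hB.apply i j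
  simp only [hsymm, Finset.sum_const, Finset.card_univ, Fintype.card_fin, nsmul_eq_mul, sq,
    Finset.mul_sum, Finset.sum_add_distrib]
  simp only [← Finset.sum_add_distrib]
  exact Finset.sum_congr rfl fun x _ => Finset.sum_congr rfl fun i _ => by ring

end GaussWick

/-- Core Gaussian moment computation: for a symmetric `N × N` matrix `B` and an `N × D`
matrix `X` of i.i.d. standard Gaussians,
`E[trace((Xᵀ B X)²)] = D Σ_{i,j} (D+1) B_{ij}² + B_{ii} B_{jj}`. -/
theorem gaussian_trace_square_moment
    (N D : ℕ) (hN : 0 < N) (hD : 0 < D)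
    (B : Matrix (Fin N) (Fin N) ℝ) (hB : B.IsSymm) :
    (∫ x : (Fin N × Fin D) → ℝ,
        Matrix.trace (((Matrix.of fun i j => x (i, j))ᵀ * B *
            (Matrix.of fun i j => x (i, j))) ^ 2)
        ∂(Measure.pi fun _ : Fin N × Fin D => gaussianReal 0 1)) =
      (D : ℝ) * ∑ i : Fin N, ∑ j : Fin N,
        (((D : ℝ) + 1) * (B i j) ^ 2 + B i i * B j j) := by
  have hpt : ∀ x : (Fin N × Fin D) → ℝ,
      Matrix.trace (((Matrix.of fun i j => x (i, j))ᵀ * B *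
          (Matrix.of fun i j => x (i, j))) ^ 2)
        = ∑ a : Fin D, ∑ b : Fin D, ∑ l : Fin N, ∑ k : Fin N, ∑ j : Fin N, ∑ i : Fin N,
            B i j * B k l * (x (i,a) * x (j,b) * x (k,b) * x (l,a)) := by
    intro x
    simp only [Matrix.trace, Matrix.diag, pow_two, Matrix.mul_apply, Matrix.transpose_apply,
      Matrix.of_apply, Finset.sum_mul, Finset.mul_sum]
    refine Finset.sum_congr rfl fun a _ => Finset.sum_congr rfl fun b _ =>
      Finset.sum_congr rfl fun l _ => Finset.sum_congr rfl fun k _ =>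
      Finset.sum_congr rfl fun j _ => Finset.sum_congr rfl fun i _ => by ring
  have hflat : ∀ x : (Fin N × Fin D) → ℝ,
      (∑ a : Fin D, ∑ b : Fin D, ∑ l : Fin N, ∑ k : Fin N, ∑ j : Fin N, ∑ i : Fin N,
          B i j * B k l * (x (i,a) * x (j,b) * x (k,b) * x (l,a)))
        = ∑ σ : Fin D × Fin D × Fin N × Fin N × Fin N × Fin N,
            B σ.2.2.2.2.2 σ.2.2.2.2.1 * B σ.2.2.2.1 σ.2.2.1 *
              (x (σ.2.2.2.2.2, σ.1) * x (σ.2.2.2.2.1, σ.2.1) *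
                x (σ.2.2.2.1, σ.2.1) * x (σ.2.2.1, σ.1)) := by
    intro x
    simp only [Fintype.sum_prod_type]
  calc (∫ x : (Fin N × Fin D) → ℝ,
        Matrix.trace (((Matrix.of fun i j => x (i, j))ᵀ * B *
            (Matrix.of fun i j => x (i, j))) ^ 2)
        ∂(Measure.pi fun _ : Fin N × Fin D => gaussianReal 0 1))
      = ∫ x : (Fin N × Fin D) → ℝ,
          ∑ σ : Fin D × Fin D × Fin N × Fin N × Fin N × Fin N,
            B σ.2.2.2.2.2 σ.2.2.2.2.1 * B σ.2.2.2.1 σ.2.2.1 *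
              (x (σ.2.2.2.2.2, σ.1) * x (σ.2.2.2.2.1, σ.2.1) *
                x (σ.2.2.2.1, σ.2.1) * x (σ.2.2.1, σ.1))
          ∂(Measure.pi fun _ : Fin N × Fin D => gaussianReal 0 1) := by
        refine integral_congr_ae (Filter.Eventually.of_forall fun x => ?_)
        exact (hpt x).trans (hflat x)
    _ = ∑ σ : Fin D × Fin D × Fin N × Fin N × Fin N × Fin N,
          ∫ x : (Fin N × Fin D) → ℝ,
            B σ.2.2.2.2.2 σ.2.2.2.2.1 * B σ.2.2.2.1 σ.2.2.1 *
              (x (σ.2.2.2.2.2, σ.1) * x (σ.2.2.2.2.1, σ.2.1) *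
                x (σ.2.2.2.1, σ.2.1) * x (σ.2.2.1, σ.1))
            ∂(Measure.pi fun _ : Fin N × Fin D => gaussianReal 0 1) :=
        integral_finset_sum _ (fun σ _ =>
          (GaussWick.integrable_monomial _ _ _ _).const_mul _)
    _ = ∑ σ : Fin D × Fin D × Fin N × Fin N × Fin N × Fin N,
          B σ.2.2.2.2.2 σ.2.2.2.2.1 * B σ.2.2.2.1 σ.2.2.1 *
            ((if ((σ.2.2.2.2.2, σ.1) : Fin N × Fin D) = (σ.2.2.2.2.1, σ.2.1) then (1:ℝ) else 0) *
                (if ((σ.2.2.2.1, σ.2.1) : Fin N × Fin D) = (σ.2.2.1, σ.1) then 1 else 0)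
              + (if ((σ.2.2.2.2.2, σ.1) : Fin N × Fin D) = (σ.2.2.2.1, σ.2.1) then (1:ℝ) else 0) *
                (if ((σ.2.2.2.2.1, σ.2.1) : Fin N × Fin D) = (σ.2.2.1, σ.1) then 1 else 0)
              + (if ((σ.2.2.2.2.2, σ.1) : Fin N × Fin D) = (σ.2.2.1, σ.1) then (1:ℝ) else 0) *
                (if ((σ.2.2.2.2.1, σ.2.1) : Fin N × Fin D) = (σ.2.2.2.1, σ.2.1) then 1 else 0)) :=
        Finset.sum_congr rfl fun σ _ => by
          rw [MeasureTheory.integral_const_mul, GaussWick.wick]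
    _ = ∑ a : Fin D, ∑ b : Fin D, ∑ l : Fin N, ∑ k : Fin N, ∑ j : Fin N, ∑ i : Fin N,
          B i j * B k l *
            ((if ((i,a) : Fin N × Fin D) = (j,b) then (1:ℝ) else 0) *
                (if ((k,b) : Fin N × Fin D) = (l,a) then 1 else 0)
              + (if ((i,a) : Fin N × Fin D) = (k,b) then (1:ℝ) else 0) *
                (if ((j,b) : Fin N × Fin D) = (l,a) then 1 else 0)
              + (if ((i,a) : Fin N × Fin D) = (l,a) then (1:ℝ) else 0) *
                (if ((j,b) : Fin N × Fin D) = (k,b) then 1 else 0)) := by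
        simp only [Fintype.sum_prod_type]
    _ = (D : ℝ) * ∑ i : Fin N, ∑ j : Fin N,
          (((D : ℝ) + 1) * (B i j) ^ 2 + B i i * B j j) := GaussWick.collapse N D B hB
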